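/- arXiv:2106.02534 — 4 statements merged into one kernel-verified Lean document; each statement's English description precedes it below -/
import Mathlib

section
/- For all nonnegative integers m and n, every cyclic permutation of length mn+2 contains the cyclic pattern [ι_{m+2}] (the cyclic increasing pattern of length m+2) or the cyclic pattern [δ_{n+2}] (the cyclic decreasing pattern of length n+2). -/
/-- A sequence `σ` of length `n` (with distinct values) contains the pattern `π`
of length `k` if some subsequence of `σ` is order isomorphic to `π`. -/
def ContainsPat {n k : ℕ} (σ : Fin n → Fin n) (π : Fin k → ℕ) : Prop :=
  ∃ f : Fin k → Fin n, StrictMono f ∧ ∀ i j : Fin k, π i < π j ↔ σ (f i) < σ (f j)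

/-- The rotation of the sequence `σ` starting at position `r`. -/
def rotSeq {n : ℕ} (σ : Fin n → Fin n) (r : Fin n) : Fin n → Fin n :=
  fun i => σ (i + r)

/-- The cyclic permutation `[σ]` contains the cyclic pattern `[π]` if some
rotation of `σ` contains `π` linearly. -/
def CycContains {n k : ℕ} (σ : Fin n → Fin n) (π : Fin k → ℕ) : Prop :=
  ∃ r : Fin n, ContainsPat (rotSeq σ r) π

/-- The cyclic permutation `[σ]` avoids the cyclic pattern `[π]`. -/
def CycAvoids {n k : ℕ} (σ : Fin n → Fin n) (π : Fin k → ℕ) : Prop :=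
  ¬ CycContains σ π

/-- The cyclic permutation `[σ]`, i.e. the set of all rotations of `σ`. -/
def CycClass {n : ℕ} (σ : Fin n → Fin n) : Set (Fin n → Fin n) :=
  Set.range (rotSeq σ)

/-- The set of cyclic permutations (rotation classes) of length `n` all of whose
representatives are permutations and which satisfy the (rotation-invariant)
predicate `P`. -/
def AvClasses (n : ℕ) (P : (Fin n → Fin n) → Prop) : Set (Set (Fin n → Fin n)) :=
  { C | ∃ σ : Equiv.Perm (Fin n), C = CycClass ⇑σ ∧ P ⇑σ }

/-- The cyclic descent number: the number of indices `i` (mod `n`) with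
`σ i > σ (i+1)`. -/
def cdes {n : ℕ} (σ : Fin n → Fin n) : ℕ :=
  (Finset.univ.filter fun i : Fin n =>
    σ ⟨(↑i + 1) % n, Nat.mod_lt _ i.pos⟩ < σ i).card

/-- The cyclic peak number: the number of indices `i` (mod `n`) with
`σ (i-1) < σ i > σ (i+1)`. -/
def cpk {n : ℕ} (σ : Fin n → Fin n) : ℕ :=
  (Finset.univ.filter fun i : Fin n =>
    σ ⟨(↑i + (n - 1)) % n, Nat.mod_lt _ i.pos⟩ < σ i ∧
    σ ⟨(↑i + 1) % n, Nat.mod_lt _ i.pos⟩ < σ i).card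

section CyclicESAux

open Finset


open Finset

variable {α : Type*} [LinearOrder α] {n : ℕ}

/-- Finsets of indices that form an increasing subsequence ending at `i`. -/
def chainsEnd (f : Fin n → α) (i : Fin n) : Finset (Finset (Fin n)) :=
  univ.powerset.filter (fun t => i ∈ t ∧ (∀ x ∈ t, x ≤ i) ∧ StrictMonoOn f ↑t)

/-- The longest increasing subsequence ending at `i`. -/
def lab (f : Fin n → α) (i : Fin n) : ℕ := (chainsEnd f i).sup Finset.card

lemma singleton_mem_chainsEnd (f : Fin n → α) (i : Fin n) : {i} ∈ chainsEnd f i := by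
  simp [chainsEnd, StrictMonoOn]

lemma lab_pos (f : Fin n → α) (i : Fin n) : 1 ≤ lab f i := by
  have := Finset.le_sup (f := Finset.card) (singleton_mem_chainsEnd f i)
  simpa [lab] using this

lemma lab_le {f : Fin n → α} {r : ℕ}
    (h : ∀ t : Finset (Fin n), StrictMonoOn f ↑t → t.card ≤ r) (i : Fin n) :
    lab f i ≤ r := by
  apply Finset.sup_le
  intro t ht
  simp only [chainsEnd, mem_filter] at ht
  exact h t ht.2.2.2

lemma lab_lt (f : Fin n → α) {i j : Fin n} (hij : i < j) (hf : f i < f j) :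
    lab f i < lab f j := by
  obtain ⟨t, ht, hcard⟩ := Finset.exists_mem_eq_sup (chainsEnd f i)
    ⟨{i}, singleton_mem_chainsEnd f i⟩ Finset.card
  simp only [chainsEnd, mem_filter] at ht
  obtain ⟨-, hit, hle, hmono⟩ := ht
  have hjt : j ∉ t := fun hj => absurd hij (not_lt.2 (hle j hj))
  have key : insert j t ∈ chainsEnd f j := by
    simp only [chainsEnd, mem_filter, mem_powerset, subset_univ, true_and]
    refine ⟨mem_insert_self _ _, ?_, ?_⟩
    · intro x hx
      rcases mem_insert.1 hx with h | h
      · exact h ▸ le_refl _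
      · exact le_of_lt (lt_of_le_of_lt (hle x h) hij)
    · intro x hx y hy hxy
      simp only [coe_insert, Set.mem_insert_iff, mem_coe] at hx hy
      rcases hx with rfl | hx <;> rcases hy with rfl | hy
      · exact absurd hxy (lt_irrefl _)
      · exact absurd hxy (not_lt.2 (le_of_lt (lt_of_le_of_lt (hle y hy) hij)))
      · -- x ∈ t, y = j
        rcases eq_or_lt_of_le (hle x hx) with rfl | hxi
        · exact hf
        · exact lt_trans (hmono hx hit hxi) hf
      · exact hmono hx hy hxy
  have := Finset.le_sup (f := Finset.card) key
  rw [Finset.card_insert_of_notMem hjt] at this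
  simp only [lab]
  omega

lemma strictAntiOn_iff_mono_dual {f : Fin n → α} {t : Finset (Fin n)} :
    StrictMonoOn (OrderDual.toDual ∘ f) ↑t ↔ StrictAntiOn f ↑t := Iff.rfl

/-- Linear Erdős–Szekeres. -/
theorem linear_es {r s : ℕ} {f : Fin n → α} (hn : r * s < n) (hf : Function.Injective f) :
    (∃ t : Finset (Fin n), r < t.card ∧ StrictMonoOn f ↑t) ∨
      ∃ t : Finset (Fin n), s < t.card ∧ StrictAntiOn f ↑t := by
  by_contra hq
  push_neg at hq
  obtain ⟨q1, q2⟩ := hq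
  set g : Fin n → αᵒᵈ := OrderDual.toDual ∘ f with hg
  have ha : ∀ i, lab f i ∈ Finset.Icc 1 r := by
    intro i
    rw [Finset.mem_Icc]
    refine ⟨lab_pos f i, lab_le (fun t ht => ?_) i⟩
    by_contra hcard
    exact absurd ht (q1 t (by omega))
  have hb : ∀ i, lab g i ∈ Finset.Icc 1 s := by
    intro i
    rw [Finset.mem_Icc]
    refine ⟨lab_pos g i, lab_le (fun t ht => ?_) i⟩
    by_contra hcard
    exact absurd (strictAntiOn_iff_mono_dual.1 ht) (q2 t (by omega))
  have hinj : Function.Injective (fun i => (lab f i, lab g i)) := by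
    intro i j hij
    by_contra hne
    rcases lt_trichotomy i j with h | h | h
    · rcases lt_trichotomy (f i) (f j) with hfij | hfij | hfij
      · have := lab_lt f h hfij
        simp only [Prod.mk.injEq] at hij; omega
      · exact hne (hf hfij)
      · have := lab_lt g h (show g i < g j by simpa [hg] using hfij)
        simp only [Prod.mk.injEq] at hij; omega
    · exact hne h
    · rcases lt_trichotomy (f j) (f i) with hfij | hfij | hfij
      · have := lab_lt f h hfij
        simp only [Prod.mk.injEq] at hij; omega
      · exact hne (hf hfij).symm
      · have := lab_lt g h (show g j < g i by simpa [hg] using hfij)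
        simp only [Prod.mk.injEq] at hij; omega
  have hcard := Finset.card_le_card_of_injOn (s := (Finset.univ : Finset (Fin n))) (fun i => (lab f i, lab g i))
    (fun i _ => Finset.mem_product.2 ⟨ha i, hb i⟩) (hinj.injOn)
  simp only [Finset.card_univ, Fintype.card_fin, Finset.card_product, Nat.card_Icc, Nat.add_sub_cancel] at hcard
  omega


lemma fin_add_one_of_lt {N : ℕ} [NeZero N] (hN : 2 ≤ N) (x : Fin N) (h : x.val + 1 < N) :
    x + 1 = ⟨x.val + 1, h⟩ := by
  apply Fin.ext
  have h1 : (1 : Fin N).val = 1 := by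
    rw [Fin.val_one']; exact Nat.mod_eq_of_lt (by omega)
  simp only [Fin.add_def, h1]
  exact Nat.mod_eq_of_lt h

lemma fin_add_one_eq_zero {N : ℕ} [NeZero N] (hN : 2 ≤ N) (x : Fin N) (h : x.val + 1 = N) :
    x + 1 = 0 := by
  apply Fin.ext
  have h1 : (1 : Fin N).val = 1 := by
    rw [Fin.val_one']; exact Nat.mod_eq_of_lt (by omega)
  simp only [Fin.add_def, h1, h, Nat.mod_self]
  rfl

end CyclicESAux

/-- Cyclic Erdős–Szekeres: every cyclic permutation of length `m*n+2` contains
the cyclic increasing pattern of length `m+2` or the cyclic decreasing pattern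
of length `n+2`. -/
theorem cyclic_erdos_szekeres (m n : ℕ) (σ : Equiv.Perm (Fin (m * n + 2))) :
    CycContains ⇑σ (fun i : Fin (m + 2) => (i : ℕ) + 1) ∨
    CycContains ⇑σ (fun i : Fin (n + 2) => (n + 2) - (i : ℕ)) := by
  haveI : NeZero (m * n + 2) := ⟨by omega⟩
  have hN2 : 2 ≤ m * n + 2 := by omega
  set r0 : Fin (m * n + 2) := σ.symm 0 with hr0
  set τ : Fin (m * n + 2) → Fin (m * n + 2) := rotSeq (⇑σ) r0 with hτ
  have hτ0 : τ 0 = 0 := by simp [hτ, rotSeq, hr0]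
  have hτinj : Function.Injective τ := by
    intro a b h
    exact add_right_cancel (σ.injective h)
  set g : Fin (m * n + 1) → Fin (m * n + 2) :=
    fun i => τ ⟨i.val + 1, by omega⟩ with hg
  have hginj : Function.Injective g := by
    intro a b h
    have h2 := congrArg Fin.val (hτinj h)
    exact Fin.ext (by simpa using h2)
  have hgne : ∀ i, g i ≠ 0 := by
    intro i h
    rw [← hτ0] at h
    have := congrArg Fin.val (hτinj h)
    simp at this
  rcases linear_es (r := m) (s := n) (by omega) hginj with ⟨t, htc, hmono⟩ | ⟨t, htc, hanti⟩
  · -- increasing case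
    left
    have hle : m + 1 ≤ t.card := htc
    set e := t.orderEmbOfCardLe hle with he
    set F : Fin (m + 2) → Fin (m * n + 2) :=
      Fin.cases 0 (fun k : Fin (m + 1) =>
        ⟨(e k).val + 1, by have := (e k).isLt; omega⟩) with hF
    have hF0 : F 0 = 0 := rfl
    have hFs : ∀ k : Fin (m + 1), F k.succ = ⟨(e k).val + 1, by have := (e k).isLt; omega⟩ := by
      intro k; simp [hF]
    have hFmono : StrictMono F := by
      intro a b hab
      induction a using Fin.cases with
      | zero =>
        induction b using Fin.cases with
        | zero => exact absurd hab (lt_irrefl _)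
        | succ k => rw [hF0, hFs]; simp [Fin.lt_def]
      | succ j =>
        induction b using Fin.cases with
        | zero => exact absurd hab (by simp [Fin.lt_def])
        | succ k =>
          have hjk : j < k := by
            rwa [Fin.succ_lt_succ_iff] at hab
          rw [hFs, hFs]
          exact Fin.mk_lt_mk.2 (Nat.succ_lt_succ (e.strictMono hjk))
    have hτFs : ∀ k : Fin (m + 1), τ (F k.succ) = g (e k) := by
      intro k; rw [hFs]
    have hτF : StrictMono (fun k => τ (F k)) := by
      intro a b hab
      induction a using Fin.cases with
      | zero =>
        induction b using Fin.cases with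
        | zero => exact absurd hab (lt_irrefl _)
        | succ k =>
          simp only [hF0, hτ0, hτFs]
          exact Fin.pos_of_ne_zero (hgne (e k))
      | succ j =>
        induction b using Fin.cases with
        | zero => exact absurd hab (by simp [Fin.lt_def])
        | succ k =>
          have hjk : j < k := by rwa [Fin.succ_lt_succ_iff] at hab
          simp only [hτFs]
          exact hmono (t.orderEmbOfCardLe_mem hle j) (t.orderEmbOfCardLe_mem hle k)
            (e.strictMono hjk)
    refine ⟨r0, F, hFmono, fun i j => ?_⟩
    have key : τ (F i) < τ (F j) ↔ i < j := hτF.lt_iff_lt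
    show (i : ℕ) + 1 < (j : ℕ) + 1 ↔ τ (F i) < τ (F j)
    simp only [Fin.lt_def] at key ⊢
    omega
  · -- decreasing case
    right
    have hle : n + 1 ≤ t.card := htc
    set e := t.orderEmbOfCardLe hle with he
    set F : Fin (n + 2) → Fin (m * n + 2) :=
      Fin.lastCases ⟨m * n + 1, by omega⟩ (fun k : Fin (n + 1) =>
        ⟨(e k).val, by have := (e k).isLt; omega⟩) with hF
    have hFc : ∀ k : Fin (n + 1), F k.castSucc = ⟨(e k).val, by have := (e k).isLt; omega⟩ := by
      intro k; simp [hF]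
    have hFl : F (Fin.last (n + 1)) = ⟨m * n + 1, by omega⟩ := by simp [hF]
    have hFmono : StrictMono F := by
      intro a b hab
      induction b using Fin.lastCases with
      | last =>
        induction a using Fin.lastCases with
        | last => exact absurd hab (lt_irrefl _)
        | cast j =>
          rw [hFc, hFl]
          exact Fin.mk_lt_mk.2 (by have := (e j).isLt; omega)
      | cast k =>
        induction a using Fin.lastCases with
        | last => exact absurd hab (not_lt.2 (Fin.le_last _))
        | cast j =>
          have hjk : j < k := by rwa [Fin.castSucc_lt_castSucc_iff] at hab
          rw [hFc, hFc]
          exact Fin.mk_lt_mk.2 (e.strictMono hjk)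
    have hshift : ∀ x : Fin (m * n + 2), rotSeq (⇑σ) (r0 + 1) x = τ (x + 1) := by
      intro x
      show σ (x + (r0 + 1)) = σ ((x + 1) + r0)
      congr 1
      rw [add_comm r0 1, ← add_assoc]
    have hvalc : ∀ k : Fin (n + 1), rotSeq (⇑σ) (r0 + 1) (F k.castSucc) = g (e k) := by
      intro k
      have hek := (e k).isLt
      rw [hshift, hFc k,
        fin_add_one_of_lt hN2 _ (show ((⟨(e k).val, by omega⟩ : Fin (m * n + 2)) : ℕ) + 1 < m * n + 2 by simp only [Fin.val_mk]; omega)]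
    have hvall : rotSeq (⇑σ) (r0 + 1) (F (Fin.last (n + 1))) = 0 := by
      rw [hshift, hFl,
        fin_add_one_eq_zero hN2 _ (by simp only [Fin.val_mk])]
      exact hτ0
    have hρanti : StrictAnti (fun k => rotSeq (⇑σ) (r0 + 1) (F k)) := by
      intro a b hab
      induction b using Fin.lastCases with
      | last =>
        induction a using Fin.lastCases with
        | last => exact absurd hab (lt_irrefl _)
        | cast j =>
          simp only [hvall, hvalc]
          exact Fin.pos_of_ne_zero (hgne (e j))
      | cast k =>
        induction a using Fin.lastCases with
        | last => exact absurd hab (not_lt.2 (Fin.le_last _))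
        | cast j =>
          have hjk : j < k := by rwa [Fin.castSucc_lt_castSucc_iff] at hab
          simp only [hvalc]
          exact hanti (t.orderEmbOfCardLe_mem hle j) (t.orderEmbOfCardLe_mem hle k)
            (e.strictMono hjk)
    refine ⟨r0 + 1, F, hFmono, fun i j => ?_⟩
    have key : rotSeq (⇑σ) (r0 + 1) (F i) < rotSeq (⇑σ) (r0 + 1) (F j) ↔ j < i :=
      hρanti.lt_iff_gt
    show (n + 2) - (i : ℕ) < (n + 2) - (j : ℕ) ↔
      rotSeq (⇑σ) (r0 + 1) (F i) < rotSeq (⇑σ) (r0 + 1) (F j)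
    simp only [Fin.lt_def] at key ⊢
    have hi := i.isLt
    have hj := j.isLt
    omega
end

section
/- For all nonnegative integers m and n, there exists a cyclic permutation of length mn+1 that avoids both the cyclic pattern [ι_{m+2}] and the cyclic pattern [δ_{n+2}]; that is, the bound mn+2 in the cyclic Erdős–Szekeres theorem is best possible. -/
/-- The multiplication-by-`n` permutation on `ZMod (m*n+1)`, which is also a
permutation of `Fin (m*n+1)` by definitional equality. -/
def mulPerm (m n : ℕ) : Equiv.Perm (ZMod (m*n+1)) where
  toFun x := (n : ZMod (m*n+1)) * x
  invFun x := (-(m : ZMod (m*n+1))) * x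
  left_inv x := by
    have h : ((m : ZMod (m*n+1)) * n) = -1 := by
      have h0 : ((m*n+1 : ℕ) : ZMod (m*n+1)) = 0 := ZMod.natCast_self _
      push_cast at h0
      linear_combination h0
    linear_combination (-x) * h
  right_inv x := by
    have h : ((m : ZMod (m*n+1)) * n) = -1 := by
      have h0 : ((m*n+1 : ℕ) : ZMod (m*n+1)) = 0 := ZMod.natCast_self _
      push_cast at h0
      linear_combination h0
    linear_combination (-x) * h

/-- `Fin (m*n+1)` is definitionally `ZMod (m*n+1)`. -/
def finToZMod {m n : ℕ} (x : Fin (m*n+1)) : ZMod (m*n+1) := x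

/-- The key arithmetic fact. If `d j`, `s j` (`j < L = m+1`) are the position
and value gaps of an increasing subsequence of length `m+2` of a rotation of the
multiplication-by-`n` permutation, then `s j ≡ n * d j (mod m*n+1)`, all gaps
are positive, and the total gaps are at most `m*n`; this is contradictory. -/
lemma cyclic_es_core (m n L : ℕ) (hL : L = m + 1) (d s : ℕ → ℤ)
    (hd : ∀ j < L, 1 ≤ d j) (hs : ∀ j < L, 1 ≤ s j)
    (hdvd : ∀ j < L, ((m:ℤ)*n+1) ∣ (n:ℤ) * d j - s j)
    (hD : ∑ j ∈ Finset.range L, d j ≤ (m:ℤ)*n)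
    (hS : ∑ j ∈ Finset.range L, s j ≤ (m:ℤ)*n) : False := by
  have key : ∀ j : ℕ, ∃ t k : ℤ, j < L →
      0 ≤ t ∧ d j = m*k + t + 1 ∧ s j = n*(t+1) - k := by
    intro j
    by_cases hj : j < L
    · obtain ⟨c, hc⟩ := hdvd j hj
      have hdj := hd j hj
      have hsj := hs j hj
      have hu : d j + m * s j = ((m:ℤ)*n+1) * (d j - m * c) := by
        linear_combination (-(m:ℤ)) * hc
      have hupos : 1 ≤ d j - m * c := by
        by_contra h
        push_neg at h
        have hm : (0:ℤ) ≤ m := by positivity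
        have h1 : ((m:ℤ)*n+1) * (d j - m*c) ≤ 0 :=
          mul_nonpos_of_nonneg_of_nonpos (by positivity) (by linarith)
        have h2 : (0:ℤ) ≤ (m:ℤ) * s j := mul_nonneg hm (by linarith)
        linarith
      refine ⟨d j - m * c - 1, (n:ℤ) * (d j - m*c) - s j, fun _ => ⟨by linarith, ?_, by ring⟩⟩
      linear_combination hu
    · exact ⟨0, 0, fun h => absurd h hj⟩
  choose t k hkey using key
  set T := ∑ j ∈ Finset.range L, t j with hT_def
  set K := ∑ j ∈ Finset.range L, k j with hK_def
  have hDsum : ∑ j ∈ Finset.range L, d j = m * K + T + L := by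
    rw [Finset.sum_congr rfl (fun j hj => ((hkey j (Finset.mem_range.mp hj)).2.1))]
    rw [Finset.sum_add_distrib, Finset.sum_add_distrib, ← Finset.mul_sum]
    simp [hK_def, hT_def]
  have hSsum : ∑ j ∈ Finset.range L, s j = n * T + n * L - K := by
    rw [Finset.sum_congr rfl (fun j hj => ((hkey j (Finset.mem_range.mp hj)).2.2))]
    rw [Finset.sum_sub_distrib, ← Finset.mul_sum]
    rw [Finset.sum_add_distrib]
    simp [hK_def, hT_def, mul_add]
  have hT0 : 0 ≤ T := Finset.sum_nonneg fun j hj => (hkey j (Finset.mem_range.mp hj)).1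
  have hnT : (0:ℤ) ≤ n * T := mul_nonneg (by positivity) hT0
  have hLc : (L:ℤ) = m + 1 := by rw [hL]; push_cast; ring
  have hK1 : (n:ℤ) ≤ K := by
    rw [hSsum] at hS
    have h3 : (n:ℤ) * L = n*m + n := by rw [hLc]; ring
    have hcomm : (n:ℤ)*m = m*n := by ring
    linarith
  have hmK : (m:ℤ)*n ≤ m*K := mul_le_mul_of_nonneg_left hK1 (by positivity)
  rw [hDsum] at hD
  linarith

/-- If `p` and `v` are strictly increasing lists of `m+2` naturals below
`m*n+1` with `v j ≡ n * p j + c (mod m*n+1)`, we get a contradiction. -/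
lemma cyclic_es_aux (m n L N : ℕ) (hN : N = m*n+1) (hL : L = m+1) (c : ZMod N)
    (p v : ℕ → ℕ)
    (hp : ∀ j, j ≤ L → p j ≤ m*n) (hv : ∀ j, j ≤ L → v j ≤ m*n)
    (hpm : ∀ j, j < L → p j < p (j+1)) (hvm : ∀ j, j < L → v j < v (j+1))
    (hcong : ∀ j, j ≤ L → (v j : ZMod N) = (n : ZMod N) * (p j : ZMod N) + c) :
    False := by
  subst hN
  apply cyclic_es_core m n L hL (fun j => (p (j+1) : ℤ) - p j) (fun j => (v (j+1) : ℤ) - v j)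
  · intro j hj; have := hpm j hj; omega
  · intro j hj; have := hvm j hj; omega
  · intro j hj
    have e : ((m:ℤ)*n+1 : ℤ) = ((m*n+1 : ℕ) : ℤ) := by push_cast; ring
    rw [e, ← ZMod.intCast_zmod_eq_zero_iff_dvd]
    push_cast
    rw [hcong j (le_of_lt hj), hcong (j+1) (by omega)]
    ring
  · rw [Finset.sum_range_sub (fun j => (p j : ℤ))]
    have h1 : ((p L : ℕ) : ℤ) ≤ (m:ℤ)*n := by exact_mod_cast hp L le_rfl
    have h0 : (0:ℤ) ≤ (p 0 : ℤ) := by positivity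
    linarith
  · rw [Finset.sum_range_sub (fun j => (v j : ℤ))]
    have h1 : ((v L : ℕ) : ℤ) ≤ (m:ℤ)*n := by exact_mod_cast hv L le_rfl
    have h0 : (0:ℤ) ≤ (v 0 : ℤ) := by positivity
    linarith

/-- Sharpness of cyclic Erdős–Szekeres: there is a cyclic permutation of length
`m*n+1` avoiding both the cyclic increasing pattern of length `m+2` and the
cyclic decreasing pattern of length `n+2`. -/
theorem cyclic_erdos_szekeres_sharp (m n : ℕ) :
    ∃ σ : Equiv.Perm (Fin (m * n + 1)),
      CycAvoids ⇑σ (fun i : Fin (m + 2) => (i : ℕ) + 1) ∧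
      CycAvoids ⇑σ (fun i : Fin (n + 2) => (n + 2) - (i : ℕ)) := by
  have hval : ∀ x : Fin (m*n+1), ((x.val : ℕ) : ZMod (m*n+1)) = finToZMod x :=
    fun x => @ZMod.natCast_rightInverse (m*n+1) ⟨by omega⟩ x
  have hmn : ((m : ZMod (m*n+1)) * n) = -1 := by
    have h0 : ((m*n+1 : ℕ) : ZMod (m*n+1)) = 0 := ZMod.natCast_self _
    push_cast at h0
    linear_combination h0
  refine ⟨mulPerm m n, ?_, ?_⟩
  · -- avoid increasing pattern of length m+2
    rintro ⟨r, f, hmono, hord⟩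
    have hrot : ∀ x : Fin (m*n+1), finToZMod (rotSeq (⇑(mulPerm m n)) r x) =
        (n : ZMod (m*n+1)) * finToZMod x + (n : ZMod (m*n+1)) * finToZMod r := by
      intro x
      show (n : ZMod (m*n+1)) * (finToZMod x + finToZMod r) = _
      ring
    refine cyclic_es_aux m n (m+1) (m*n+1) rfl rfl ((n : ZMod (m*n+1)) * finToZMod r)
      (fun j => (f ⟨min j (m+1), by omega⟩).val)
      (fun j => (rotSeq (⇑(mulPerm m n)) r (f ⟨min j (m+1), by omega⟩)).val)
      ?_ ?_ ?_ ?_ ?_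
    · intro j hj
      exact Nat.lt_succ_iff.mp (Fin.is_lt _)
    · intro j hj
      exact Nat.lt_succ_iff.mp (Fin.is_lt _)
    · intro j hj
      exact hmono (show (⟨min j (m+1), by omega⟩ : Fin (m+2)) < ⟨min (j+1) (m+1), by omega⟩ by
        simp only [Fin.mk_lt_mk]; omega)
    · intro j hj
      exact (hord ⟨min j (m+1), by omega⟩ ⟨min (j+1) (m+1), by omega⟩).mp
        (show min j (m+1) + 1 < min (j+1) (m+1) + 1 by omega)
    · intro j hj
      rw [hval, hval, hrot]
  · -- avoid decreasing pattern of length n+2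
    rintro ⟨r, f, hmono, hord⟩
    have hrot : ∀ x : Fin (m*n+1), finToZMod (rotSeq (⇑(mulPerm m n)) r x) =
        (n : ZMod (m*n+1)) * finToZMod x + (n : ZMod (m*n+1)) * finToZMod r := by
      intro x
      show (n : ZMod (m*n+1)) * (finToZMod x + finToZMod r) = _
      ring
    refine cyclic_es_aux n m (n+1) (m*n+1) (by ring) rfl
      (-(m : ZMod (m*n+1)) * ((n : ZMod (m*n+1)) * finToZMod r) - 1)
      (fun j => (rotSeq (⇑(mulPerm m n)) r (f ⟨min (n+1-j) (n+1), by omega⟩)).val)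
      (fun j => m*n - (f ⟨min (n+1-j) (n+1), by omega⟩).val)
      ?_ ?_ ?_ ?_ ?_
    · intro j hj
      rw [Nat.mul_comm n m]
      exact Nat.lt_succ_iff.mp (Fin.is_lt _)
    · intro j hj
      rw [Nat.mul_comm n m]
      exact Nat.sub_le _ _
    · intro j hj
      exact (hord ⟨min (n+1-j) (n+1), by omega⟩ ⟨min (n+1-(j+1)) (n+1), by omega⟩).mp
        (show n + 2 - min (n+1-j) (n+1) < n + 2 - min (n+1-(j+1)) (n+1) by omega)
    · intro j hj
      have h1 : (f ⟨min (n+1-(j+1)) (n+1), by omega⟩).val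
          < (f ⟨min (n+1-j) (n+1), by omega⟩).val :=
        hmono (show (⟨min (n+1-(j+1)) (n+1), by omega⟩ : Fin (n+2))
            < ⟨min (n+1-j) (n+1), by omega⟩ by
          simp only [Fin.mk_lt_mk]; omega)
      have h2 : (f ⟨min (n+1-j) (n+1), by omega⟩).val ≤ m*n :=
        Nat.lt_succ_iff.mp (Fin.is_lt _)
      show m*n - (f ⟨min (n+1-j) (n+1), by omega⟩).val
          < m*n - (f ⟨min (n+1-(j+1)) (n+1), by omega⟩).val
      omega
    · intro j hj
      rw [Nat.cast_sub (Nat.lt_succ_iff.mp (Fin.is_lt _)), hval, hval, hrot]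
      push_cast
      linear_combination (1 - finToZMod (f ⟨min (n+1-j) (n+1), by omega⟩)) * hmn
end

section
/- For every integer n ≥ 3, the number of cyclic permutations of length n avoiding both cyclic patterns [1234] and [1342] equals 2(n−2); that is, #Av_n([1234],[1342]) = 2(n−2). -/
/-! ### Canonical avoiders -/

/-- Value at position `q` of the canonical avoider determined by `(p, ε)`:
the decreasing word `n-1, n-2, …, 2` (0-indexed values) with one of the two
small values `0, 1` inserted at position `p` and the other at the end. -/
def gVal (n p : ℕ) (ε : Bool) (q : ℕ) : ℕ :=
  if q = p then (if ε then 0 else 1)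
  else if q = n - 1 then (if ε then 1 else 0)
  else if q < p then n - 1 - q else n - q

lemma gVal_lt {n p : ℕ} (hn : 3 ≤ n) (hp1 : 1 ≤ p) (hp2 : p ≤ n - 2) (ε : Bool)
    (q : ℕ) (hq : q < n) : gVal n p ε q < n := by
  cases ε <;> unfold gVal <;> split_ifs <;> omega

/-- The canonical avoider as a function `Fin n → Fin n`. -/
def gfun (n p : ℕ) (ε : Bool) : Fin n → Fin n :=
  fun i => ⟨gVal n p ε i % n, Nat.mod_lt _ i.pos⟩

lemma gfun_val {n p : ℕ} (hn : 3 ≤ n) (hp1 : 1 ≤ p) (hp2 : p ≤ n - 2) (ε : Bool)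
    (i : Fin n) : (gfun n p ε i : ℕ) = gVal n p ε i := by
  simp [gfun, Nat.mod_eq_of_lt (gVal_lt hn hp1 hp2 ε i i.isLt)]

/-! ### Occurrence builders and extractors -/

lemma contains1234 {n : ℕ} (w : Fin n → Fin n) (a b c d : Fin n)
    (hab : a < b) (hbc : b < c) (hcd : c < d)
    (v1 : w a < w b) (v2 : w b < w c) (v3 : w c < w d) :
    ContainsPat w ![1,2,3,4] := by
  have q1 : w a < w b := v1
  have q2 : w a < w c := v1.trans v2
  have q3 : w a < w d := (v1.trans v2).trans v3
  have q4 : w b < w c := v2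
  have q5 : w b < w d := v2.trans v3
  have q6 : w c < w d := v3
  refine ⟨![a,b,c,d], ?_, ?_⟩
  · intro i j hij
    fin_cases i <;> fin_cases j <;>
      first
        | exact absurd hij (by decide)
        | exact hab | exact hbc | exact hcd
        | exact hab.trans hbc | exact hbc.trans hcd
        | exact (hab.trans hbc).trans hcd
  · intro i j
    fin_cases i <;> fin_cases j <;>
      first
        | exact iff_of_false (by decide) (lt_irrefl _)
        | exact iff_of_true (by decide) q1 | exact iff_of_false (by decide) (asymm q1)
        | exact iff_of_true (by decide) q2 | exact iff_of_false (by decide) (asymm q2)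
        | exact iff_of_true (by decide) q3 | exact iff_of_false (by decide) (asymm q3)
        | exact iff_of_true (by decide) q4 | exact iff_of_false (by decide) (asymm q4)
        | exact iff_of_true (by decide) q5 | exact iff_of_false (by decide) (asymm q5)
        | exact iff_of_true (by decide) q6 | exact iff_of_false (by decide) (asymm q6)

lemma contains1342 {n : ℕ} (w : Fin n → Fin n) (a b c d : Fin n)
    (hab : a < b) (hbc : b < c) (hcd : c < d)
    (v1 : w a < w d) (v2 : w d < w b) (v3 : w b < w c) :
    ContainsPat w ![1,3,4,2] := by
  have q1 : w a < w b := v1.trans v2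
  have q2 : w a < w c := (v1.trans v2).trans v3
  have q3 : w a < w d := v1
  have q4 : w b < w c := v3
  have q5 : w d < w b := v2
  have q6 : w d < w c := v2.trans v3
  refine ⟨![a,b,c,d], ?_, ?_⟩
  · intro i j hij
    fin_cases i <;> fin_cases j <;>
      first
        | exact absurd hij (by decide)
        | exact hab | exact hbc | exact hcd
        | exact hab.trans hbc | exact hbc.trans hcd
        | exact (hab.trans hbc).trans hcd
  · intro i j
    fin_cases i <;> fin_cases j <;>
      first
        | exact iff_of_false (by decide) (lt_irrefl _)
        | exact iff_of_true (by decide) q1 | exact iff_of_false (by decide) (asymm q1)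
        | exact iff_of_true (by decide) q2 | exact iff_of_false (by decide) (asymm q2)
        | exact iff_of_true (by decide) q3 | exact iff_of_false (by decide) (asymm q3)
        | exact iff_of_true (by decide) q4 | exact iff_of_false (by decide) (asymm q4)
        | exact iff_of_true (by decide) q5 | exact iff_of_false (by decide) (asymm q5)
        | exact iff_of_true (by decide) q6 | exact iff_of_false (by decide) (asymm q6)

lemma extract1234 {n : ℕ} (w : Fin n → Fin n) (h : ContainsPat w ![1,2,3,4]) :
    ∃ a b c d : Fin n, a < b ∧ b < c ∧ c < d ∧
      w a < w b ∧ w b < w c ∧ w c < w d := by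
  obtain ⟨f, hf, hspec⟩ := h
  exact ⟨f 0, f 1, f 2, f 3, hf (by decide), hf (by decide), hf (by decide),
    (hspec 0 1).mp (by norm_num), (hspec 1 2).mp (by decide), (hspec 2 3).mp (by decide)⟩

lemma extract1342 {n : ℕ} (w : Fin n → Fin n) (h : ContainsPat w ![1,3,4,2]) :
    ∃ a b c d : Fin n, a < b ∧ b < c ∧ c < d ∧
      w a < w d ∧ w d < w b ∧ w b < w c := by
  obtain ⟨f, hf, hspec⟩ := h
  exact ⟨f 0, f 1, f 2, f 3, hf (by decide), hf (by decide), hf (by decide),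
    (hspec 0 3).mp (by decide), (hspec 3 1).mp (by decide), (hspec 1 2).mp (by decide)⟩

lemma occ1234 {n : ℕ} (σ : Fin n → Fin n) (r a b c d : Fin n)
    (hab : a < b) (hbc : b < c) (hcd : c < d)
    (v1 : σ (a + r) < σ (b + r)) (v2 : σ (b + r) < σ (c + r))
    (v3 : σ (c + r) < σ (d + r)) : CycContains σ ![1,2,3,4] :=
  ⟨r, contains1234 _ a b c d hab hbc hcd v1 v2 v3⟩

lemma occ1342 {n : ℕ} (σ : Fin n → Fin n) (r a b c d : Fin n)
    (hab : a < b) (hbc : b < c) (hcd : c < d)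
    (v1 : σ (a + r) < σ (d + r)) (v2 : σ (d + r) < σ (b + r))
    (v3 : σ (b + r) < σ (c + r)) : CycContains σ ![1,3,4,2] :=
  ⟨r, contains1342 _ a b c d hab hbc hcd v1 v2 v3⟩

lemma fin_add_eq' {n : ℕ} (a r t : Fin n) (h : (a : ℕ) + r = t ∨ (a : ℕ) + r = t + n) :
    a + r = t := by
  apply Fin.ext
  rw [Fin.val_add]
  rcases h with h | h
  · rw [h, Nat.mod_eq_of_lt t.isLt]
  · rw [h, Nat.add_mod_right, Nat.mod_eq_of_lt t.isLt]

lemma val_add_cases {n : ℕ} (a r : Fin n) :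
    ((a + r : Fin n) : ℕ) = ↑a + ↑r ∨
      (((a + r : Fin n) : ℕ) = ↑a + ↑r - n ∧ n ≤ ↑a + ↑r) := by
  have ha := a.isLt; have hr := r.isLt
  rcases Nat.lt_or_ge (↑a + ↑r) n with h | h
  · left; rw [Fin.val_add, Nat.mod_eq_of_lt h]
  · right
    refine ⟨?_, h⟩
    rw [Fin.val_add, Nat.mod_eq_sub_mod h, Nat.mod_eq_of_lt (by omega)]

/-! ### The six explicit occurrences used in the structure analysis -/

lemma occA {n : ℕ} (σ : Fin n → Fin n) (hn0 : 0 < n)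
    (q1 q2 m : Fin n) (h0 : (σ ⟨0, hn0⟩ : ℕ) = n - 1)
    (h12 : (q1 : ℕ) < q2) (hsm : (σ m : ℕ) ≤ 1)
    (hm1 : 1 ≤ (m : ℕ)) (hmq : (m : ℕ) < q1) (hb1 : 2 ≤ (σ q1 : ℕ))
    (hvlt : (σ q1 : ℕ) < σ q2) (htop : (σ q2 : ℕ) < n - 1) :
    CycContains σ ![1,2,3,4] := by
  have hq2n := q2.isLt
  refine occ1234 σ m ⟨0, hn0⟩ ⟨(q1 : ℕ) - m, by omega⟩ ⟨(q2 : ℕ) - m, by omega⟩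
    ⟨n - (m : ℕ), by omega⟩ (Fin.mk_lt_mk.mpr (by omega)) (Fin.mk_lt_mk.mpr (by omega))
    (Fin.mk_lt_mk.mpr (by omega)) ?_ ?_ ?_
  · rw [fin_add_eq' ⟨0, hn0⟩ m m (Or.inl (by simp)),
      fin_add_eq' ⟨(q1 : ℕ) - m, by omega⟩ m q1 (Or.inl (by simp <;> omega))]
    exact Fin.lt_def.mpr (by omega)
  · rw [fin_add_eq' ⟨(q1 : ℕ) - m, by omega⟩ m q1 (Or.inl (by simp <;> omega)),
      fin_add_eq' ⟨(q2 : ℕ) - m, by omega⟩ m q2 (Or.inl (by simp <;> omega))]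
    exact Fin.lt_def.mpr (by omega)
  · rw [fin_add_eq' ⟨(q2 : ℕ) - m, by omega⟩ m q2 (Or.inl (by simp <;> omega)),
      fin_add_eq' ⟨n - (m : ℕ), by omega⟩ m ⟨0, hn0⟩ (Or.inr (by simp <;> omega))]
    exact Fin.lt_def.mpr (by rw [h0]; omega)

lemma occB {n : ℕ} (σ : Fin n → Fin n) (hn0 : 0 < n)
    (q1 q2 m : Fin n) (h0 : (σ ⟨0, hn0⟩ : ℕ) = n - 1)
    (h12 : (q1 : ℕ) < q2) (hsm : (σ m : ℕ) ≤ 1)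
    (hq1m : (q1 : ℕ) < m) (hmq2 : (m : ℕ) < q2) (hq11 : 1 ≤ (q1 : ℕ))
    (hb1 : 2 ≤ (σ q1 : ℕ)) (hvlt : (σ q1 : ℕ) < σ q2) (htop : (σ q2 : ℕ) < n - 1) :
    CycContains σ ![1,3,4,2] := by
  have hq2n := q2.isLt
  have hmn := m.isLt
  refine occ1342 σ m ⟨0, hn0⟩ ⟨(q2 : ℕ) - m, by omega⟩ ⟨n - (m : ℕ), by omega⟩
    ⟨n - (m : ℕ) + q1, by omega⟩ (Fin.mk_lt_mk.mpr (by omega)) (Fin.mk_lt_mk.mpr (by omega))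
    (Fin.mk_lt_mk.mpr (by omega)) ?_ ?_ ?_
  · rw [fin_add_eq' ⟨0, hn0⟩ m m (Or.inl (by simp)),
      fin_add_eq' ⟨n - (m : ℕ) + q1, by omega⟩ m q1 (Or.inr (by simp <;> omega))]
    exact Fin.lt_def.mpr (by omega)
  · rw [fin_add_eq' ⟨n - (m : ℕ) + q1, by omega⟩ m q1 (Or.inr (by simp <;> omega)),
      fin_add_eq' ⟨(q2 : ℕ) - m, by omega⟩ m q2 (Or.inl (by simp <;> omega))]
    exact Fin.lt_def.mpr (by omega)
  · rw [fin_add_eq' ⟨(q2 : ℕ) - m, by omega⟩ m q2 (Or.inl (by simp <;> omega)),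
      fin_add_eq' ⟨n - (m : ℕ), by omega⟩ m ⟨0, hn0⟩ (Or.inr (by simp <;> omega))]
    exact Fin.lt_def.mpr (by rw [h0]; omega)

lemma occC {n : ℕ} (σ : Fin n → Fin n) (hn0 : 0 < n)
    (q1 q2 m1 m2 : Fin n)
    (h12 : (q1 : ℕ) < q2) (hv1 : (σ m1 : ℕ) = 0) (hv2 : (σ m2 : ℕ) = 1)
    (hq2m : (q2 : ℕ) < m1) (hm12 : (m1 : ℕ) < m2) (hq11 : 1 ≤ (q1 : ℕ))
    (hb1 : 2 ≤ (σ q1 : ℕ)) (hvlt : (σ q1 : ℕ) < σ q2) :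
    CycContains σ ![1,2,3,4] := by
  have hm2n := m2.isLt
  have hm1n := m1.isLt
  refine occ1234 σ m1 ⟨0, hn0⟩ ⟨(m2 : ℕ) - m1, by omega⟩ ⟨n - (m1 : ℕ) + q1, by omega⟩
    ⟨n - (m1 : ℕ) + q2, by omega⟩ (Fin.mk_lt_mk.mpr (by omega)) (Fin.mk_lt_mk.mpr (by omega))
    (Fin.mk_lt_mk.mpr (by omega)) ?_ ?_ ?_
  · rw [fin_add_eq' ⟨0, hn0⟩ m1 m1 (Or.inl (by simp)),
      fin_add_eq' ⟨(m2 : ℕ) - m1, by omega⟩ m1 m2 (Or.inl (by simp <;> omega))]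
    exact Fin.lt_def.mpr (by omega)
  · rw [fin_add_eq' ⟨(m2 : ℕ) - m1, by omega⟩ m1 m2 (Or.inl (by simp <;> omega)),
      fin_add_eq' ⟨n - (m1 : ℕ) + q1, by omega⟩ m1 q1 (Or.inr (by simp <;> omega))]
    exact Fin.lt_def.mpr (by omega)
  · rw [fin_add_eq' ⟨n - (m1 : ℕ) + q1, by omega⟩ m1 q1 (Or.inr (by simp <;> omega)),
      fin_add_eq' ⟨n - (m1 : ℕ) + q2, by omega⟩ m1 q2 (Or.inr (by simp <;> omega))]
    exact Fin.lt_def.mpr (by omega)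

lemma occD {n : ℕ} (σ : Fin n → Fin n) (hn0 : 0 < n)
    (q1 q2 m1 m2 : Fin n)
    (h12 : (q1 : ℕ) < q2) (hv1 : (σ m1 : ℕ) = 1) (hv2 : (σ m2 : ℕ) = 0)
    (hq2m : (q2 : ℕ) < m1) (hm12 : (m1 : ℕ) < m2) (hq11 : 1 ≤ (q1 : ℕ))
    (hb1 : 2 ≤ (σ q1 : ℕ)) (hvlt : (σ q1 : ℕ) < σ q2) :
    CycContains σ ![1,3,4,2] := by
  have hm2n := m2.isLt
  have hm1n := m1.isLt
  refine occ1342 σ m2 ⟨0, hn0⟩ ⟨n - (m2 : ℕ) + q1, by omega⟩ ⟨n - (m2 : ℕ) + q2, by omega⟩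
    ⟨n - (m2 : ℕ) + m1, by omega⟩ (Fin.mk_lt_mk.mpr (by omega)) (Fin.mk_lt_mk.mpr (by omega))
    (Fin.mk_lt_mk.mpr (by omega)) ?_ ?_ ?_
  · rw [fin_add_eq' ⟨0, hn0⟩ m2 m2 (Or.inl (by simp)),
      fin_add_eq' ⟨n - (m2 : ℕ) + m1, by omega⟩ m2 m1 (Or.inr (by simp <;> omega))]
    exact Fin.lt_def.mpr (by omega)
  · rw [fin_add_eq' ⟨n - (m2 : ℕ) + m1, by omega⟩ m2 m1 (Or.inr (by simp <;> omega)),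
      fin_add_eq' ⟨n - (m2 : ℕ) + q1, by omega⟩ m2 q1 (Or.inr (by simp <;> omega))]
    exact Fin.lt_def.mpr (by omega)
  · rw [fin_add_eq' ⟨n - (m2 : ℕ) + q1, by omega⟩ m2 q1 (Or.inr (by simp <;> omega)),
      fin_add_eq' ⟨n - (m2 : ℕ) + q2, by omega⟩ m2 q2 (Or.inr (by simp <;> omega))]
    exact Fin.lt_def.mpr (by omega)

lemma occE {n : ℕ} (σ : Fin n → Fin n) (hn0 : 0 < n) (hn1 : n - 1 < n)
    (c0 c1 : Fin n) (h0 : (σ ⟨0, hn0⟩ : ℕ) = n - 1)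
    (hv0 : (σ c0 : ℕ) = 0) (hv1 : (σ c1 : ℕ) = 1)
    (hc01 : (c0 : ℕ) < c1) (hc0p : 1 ≤ (c0 : ℕ)) (hc1l : (c1 : ℕ) < n - 1)
    (hM : 2 ≤ (σ ⟨n - 1, hn1⟩ : ℕ)) (hMl : (σ ⟨n - 1, hn1⟩ : ℕ) < n - 1) :
    CycContains σ ![1,2,3,4] := by
  refine occ1234 σ c0 ⟨0, hn0⟩ ⟨(c1 : ℕ) - c0, by omega⟩ ⟨n - 1 - (c0 : ℕ), by omega⟩
    ⟨n - (c0 : ℕ), by omega⟩ (Fin.mk_lt_mk.mpr (by omega)) (Fin.mk_lt_mk.mpr (by omega))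
    (Fin.mk_lt_mk.mpr (by omega)) ?_ ?_ ?_
  · rw [fin_add_eq' ⟨0, hn0⟩ c0 c0 (Or.inl (by simp)),
      fin_add_eq' ⟨(c1 : ℕ) - c0, by omega⟩ c0 c1 (Or.inl (by simp <;> omega))]
    exact Fin.lt_def.mpr (by omega)
  · rw [fin_add_eq' ⟨(c1 : ℕ) - c0, by omega⟩ c0 c1 (Or.inl (by simp <;> omega)),
      fin_add_eq' ⟨n - 1 - (c0 : ℕ), by omega⟩ c0 ⟨n - 1, hn1⟩ (Or.inl (by simp <;> omega))]
    exact Fin.lt_def.mpr (by omega)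
  · rw [fin_add_eq' ⟨n - 1 - (c0 : ℕ), by omega⟩ c0 ⟨n - 1, hn1⟩ (Or.inl (by simp <;> omega)),
      fin_add_eq' ⟨n - (c0 : ℕ), by omega⟩ c0 ⟨0, hn0⟩ (Or.inr (by simp <;> omega))]
    exact Fin.lt_def.mpr (by rw [h0]; omega)

lemma occF {n : ℕ} (σ : Fin n → Fin n) (hn0 : 0 < n) (hn1 : n - 1 < n)
    (c0 c1 : Fin n) (h0 : (σ ⟨0, hn0⟩ : ℕ) = n - 1)
    (hv0 : (σ c0 : ℕ) = 0) (hv1 : (σ c1 : ℕ) = 1)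
    (hc10 : (c1 : ℕ) < c0) (hc1p : 1 ≤ (c1 : ℕ)) (hc0l : (c0 : ℕ) < n - 1)
    (hM : 2 ≤ (σ ⟨n - 1, hn1⟩ : ℕ)) (hMl : (σ ⟨n - 1, hn1⟩ : ℕ) < n - 1) :
    CycContains σ ![1,3,4,2] := by
  refine occ1342 σ c0 ⟨0, hn0⟩ ⟨n - 1 - (c0 : ℕ), by omega⟩ ⟨n - (c0 : ℕ), by omega⟩
    ⟨n - (c0 : ℕ) + c1, by omega⟩ (Fin.mk_lt_mk.mpr (by omega)) (Fin.mk_lt_mk.mpr (by omega))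
    (Fin.mk_lt_mk.mpr (by omega)) ?_ ?_ ?_
  · rw [fin_add_eq' ⟨0, hn0⟩ c0 c0 (Or.inl (by simp)),
      fin_add_eq' ⟨n - (c0 : ℕ) + c1, by omega⟩ c0 c1 (Or.inr (by simp <;> omega))]
    exact Fin.lt_def.mpr (by omega)
  · rw [fin_add_eq' ⟨n - (c0 : ℕ) + c1, by omega⟩ c0 c1 (Or.inr (by simp <;> omega)),
      fin_add_eq' ⟨n - 1 - (c0 : ℕ), by omega⟩ c0 ⟨n - 1, hn1⟩ (Or.inl (by simp <;> omega))]
    exact Fin.lt_def.mpr (by omega)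
  · rw [fin_add_eq' ⟨n - 1 - (c0 : ℕ), by omega⟩ c0 ⟨n - 1, hn1⟩ (Or.inl (by simp <;> omega)),
      fin_add_eq' ⟨n - (c0 : ℕ), by omega⟩ c0 ⟨0, hn0⟩ (Or.inr (by simp <;> omega))]
    exact Fin.lt_def.mpr (by rw [h0]; omega)

/-! ### The avoidance lemma: the canonical shape avoids both patterns -/

lemma avoid_of_shape {n p : ℕ} (hn : 3 ≤ n) (hp : p < n - 1) (σ : Fin n → Fin n)
    (H1 : ∀ a b : Fin n, (a : ℕ) < b → 2 ≤ (σ a : ℕ) → 2 ≤ (σ b : ℕ) → (σ b : ℕ) < σ a)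
    (H2 : ∀ a : Fin n, (σ a : ℕ) ≤ 1 → (a : ℕ) = p ∨ (a : ℕ) = n - 1) :
    CycAvoids σ ![1,2,3,4] ∧ CycAvoids σ ![1,3,4,2] := by
  constructor
  · rintro ⟨r, hcp⟩
    obtain ⟨a, b, c, d, hab, hbc, hcd, w1, w2, w3⟩ := extract1234 _ hcp
    have ha := a.isLt; have hb := b.isLt; have hc := c.isLt; have hd := d.isLt
    have hr := r.isLt
    have hab' : (a:ℕ) < b := hab
    have hbc' : (b:ℕ) < c := hbc
    have hcd' : (c:ℕ) < d := hcd
    set A := a + r with hAdef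
    set B := b + r with hBdef
    set C := c + r with hCdef
    set D := d + r with hDdef
    have hA := val_add_cases a r
    have hB := val_add_cases b r
    have hC := val_add_cases c r
    have hD := val_add_cases d r
    have hAn := A.isLt; have hBn := B.isLt; have hCn := C.isLt; have hDn := D.isLt
    have v1 : (σ A : ℕ) < σ B := w1
    have v2 : (σ B : ℕ) < σ C := w2
    have v3 : (σ C : ℕ) < σ D := w3
    have hDC : (D : ℕ) < C := by
      rcases Nat.lt_trichotomy (C : ℕ) (D : ℕ) with h | h | h
      · have := H1 C D h (by omega) (by omega); omega
      · have : (σ C : ℕ) = σ D := congrArg (fun x : Fin n => (σ x : ℕ)) (Fin.ext h); omega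
      · exact h
    by_cases h2 : 2 ≤ (σ B : ℕ)
    · have hCB : (C : ℕ) < B := by
        rcases Nat.lt_trichotomy (B : ℕ) (C : ℕ) with h | h | h
        · have := H1 B C h h2 (by omega); omega
        · have : (σ B : ℕ) = σ C := congrArg (fun x : Fin n => (σ x : ℕ)) (Fin.ext h); omega
        · exact h
      omega
    · have e1 : (σ A : ℕ) = 0 := by omega
      have e2 : (σ B : ℕ) = 1 := by omega
      have h2A := H2 A (by omega)
      have h2B := H2 B (by omega)
      have hne : (A : ℕ) ≠ B := by
        intro h
        have : (σ A : ℕ) = σ B := congrArg (fun x : Fin n => (σ x : ℕ)) (Fin.ext h); omega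
      omega
  · rintro ⟨r, hcp⟩
    obtain ⟨a, b, c, d, hab, hbc, hcd, w1, w2, w3⟩ := extract1342 _ hcp
    have ha := a.isLt; have hb := b.isLt; have hc := c.isLt; have hd := d.isLt
    have hr := r.isLt
    have hab' : (a:ℕ) < b := hab
    have hbc' : (b:ℕ) < c := hbc
    have hcd' : (c:ℕ) < d := hcd
    set A := a + r with hAdef
    set B := b + r with hBdef
    set C := c + r with hCdef
    set D := d + r with hDdef
    have hA := val_add_cases a r
    have hB := val_add_cases b r
    have hC := val_add_cases c r
    have hD := val_add_cases d r
    have hAn := A.isLt; have hBn := B.isLt; have hCn := C.isLt; have hDn := D.isLt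
    have v1 : (σ A : ℕ) < σ D := w1
    have v2 : (σ D : ℕ) < σ B := w2
    have v3 : (σ B : ℕ) < σ C := w3
    have hCB : (C : ℕ) < B := by
      rcases Nat.lt_trichotomy (B : ℕ) (C : ℕ) with h | h | h
      · have := H1 B C h (by omega) (by omega); omega
      · have : (σ B : ℕ) = σ C := congrArg (fun x : Fin n => (σ x : ℕ)) (Fin.ext h); omega
      · exact h
    by_cases h2 : 2 ≤ (σ D : ℕ)
    · have hBD : (B : ℕ) < D := by
        rcases Nat.lt_trichotomy (D : ℕ) (B : ℕ) with h | h | h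
        · have := H1 D B h h2 (by omega); omega
        · have : (σ D : ℕ) = σ B := congrArg (fun x : Fin n => (σ x : ℕ)) (Fin.ext h); omega
        · exact h
      omega
    · have e1 : (σ A : ℕ) = 0 := by omega
      have e2 : (σ D : ℕ) = 1 := by omega
      have h2A := H2 A (by omega)
      have h2D := H2 D (by omega)
      have hne : (A : ℕ) ≠ D := by
        intro h
        have : (σ A : ℕ) = σ D := congrArg (fun x : Fin n => (σ x : ℕ)) (Fin.ext h); omega
      omega

/-- Counting argument: with the two small values at positions `p` and `n-1`,
big values decreasing, and the maximum at position 0, the permutation is the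
canonical one. -/
lemma canonical_of_facts {n : ℕ} (hn : 3 ≤ n) (hn0 : 0 < n) (hn1 : n - 1 < n)
    (σ : Fin n → Fin n) (hbij : Function.Bijective σ)
    (h0 : (σ ⟨0, hn0⟩ : ℕ) = n - 1)
    (BD : ∀ q1 q2 : Fin n, (q1 : ℕ) < q2 → 2 ≤ (σ q1 : ℕ) → 2 ≤ (σ q2 : ℕ) →
      (σ q2 : ℕ) < σ q1)
    (p : ℕ) (ε : Bool) (hp1 : 1 ≤ p) (hp2 : p ≤ n - 2) (hplt : p < n)
    (hpv : (σ ⟨p, hplt⟩ : ℕ) = (if ε then 0 else 1))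
    (hnv : (σ ⟨n - 1, hn1⟩ : ℕ) = (if ε then 1 else 0)) :
    ∀ i : Fin n, (σ i : ℕ) = gVal n p ε i := by
  have hinj : ∀ x y : Fin n, (σ x : ℕ) = (σ y : ℕ) → (x : ℕ) = (y : ℕ) := by
    intro x y h
    exact congrArg Fin.val (hbij.1 (Fin.ext h))
  have hzero : ∀ x : Fin n, (x : ℕ) = 0 → (σ x : ℕ) = n - 1 := by
    intro x h
    have : x = ⟨0, hn0⟩ := Fin.ext h
    rw [this]; exact h0
  have hnz : ∀ x : Fin n, (x : ℕ) ≠ 0 → (σ x : ℕ) < n - 1 := by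
    intro x h
    have h1 : (σ x : ℕ) < n := (σ x).isLt
    have h2 : (σ x : ℕ) ≠ n - 1 := fun hc => by
      have := hinj x ⟨0, hn0⟩ (by rw [hc, h0])
      simp at this; omega
    omega
  intro i
  have hpv' : (σ ⟨p, hplt⟩ : ℕ) ≤ 1 := by cases ε <;> simp at hpv <;> omega
  have hnv' : (σ ⟨n - 1, hn1⟩ : ℕ) ≤ 1 := by cases ε <;> simp at hnv <;> omega
  have hpnv : (σ ⟨p, hplt⟩ : ℕ) ≠ (σ ⟨n - 1, hn1⟩ : ℕ) := by
    cases ε <;> simp at hpv hnv <;> omega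
  have hsm : ∀ j : Fin n, (σ j : ℕ) ≤ 1 → (j : ℕ) = p ∨ (j : ℕ) = n - 1 := by
    intro j hj
    rcases Nat.lt_trichotomy (σ j : ℕ) (σ (⟨p, hplt⟩ : Fin n) : ℕ) with h | h | h
    · right
      have h' : (σ j : ℕ) = (σ (⟨n - 1, hn1⟩ : Fin n) : ℕ) := by omega
      have := hinj _ _ h'
      simpa using this
    · have := hinj _ _ h
      left; simpa using this
    · right
      have h' : (σ j : ℕ) = (σ (⟨n - 1, hn1⟩ : Fin n) : ℕ) := by omega
      have := hinj _ _ h'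
      simpa using this
  by_cases hi0 : (i : ℕ) = 0
  · have := hzero i hi0
    unfold gVal
    rw [hi0]
    split_ifs <;> omega
  · by_cases hip : (i : ℕ) = p
    · have hieq : i = ⟨p, hplt⟩ := Fin.ext hip
      rw [hieq, hpv]
      unfold gVal
      simp
    · by_cases hil : (i : ℕ) = n - 1
      · have hieq : i = ⟨n - 1, hn1⟩ := Fin.ext hil
        rw [hieq, hnv]
        unfold gVal
        simp [show n - 1 ≠ p by omega]
      · have hbig : 2 ≤ (σ i : ℕ) := by
          rcases Nat.lt_or_ge (σ i : ℕ) 2 with h | h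
          · rcases hsm i (by omega) with h' | h' <;> omega
          · exact h
        have hib := i.isLt
        have htop : (σ i : ℕ) < n - 1 := hnz i hi0
        have hcard1 : (Finset.univ.filter fun j : Fin n => σ i < σ j).card
            = n - 1 - (σ i : ℕ) := by
          rw [show (Finset.univ.filter fun j : Fin n => σ i < σ j).card
              = (Finset.univ.filter fun u : Fin n => σ i < u).card from ?_]
          · rw [show (Finset.univ.filter fun u : Fin n => σ i < u) = Finset.Ioi (σ i) from ?_]
            · exact Fin.card_Ioi (σ i)
            · ext u; simp
          · apply Finset.card_bij (fun j _ => σ j)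
            · intro j hj; simp at hj ⊢; exact hj
            · intro x hx y hy h; exact hbij.1 h
            · intro u hu
              obtain ⟨j, rfl⟩ := hbij.2 u
              simp at hu
              exact ⟨j, by simp [hu], rfl⟩
        have hset : (Finset.univ.filter fun j : Fin n => σ i < σ j)
            = Finset.univ.filter fun j : Fin n => (j : ℕ) < i ∧ (j : ℕ) ≠ p := by
          ext j
          simp only [Finset.mem_filter, Finset.mem_univ, true_and]
          constructor
          · intro hj
            have hj' : (σ i : ℕ) < σ j := hj
            have hjbig : 2 ≤ (σ j : ℕ) := by omega
            have hjp : (j : ℕ) ≠ p := fun hc => by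
              have : j = ⟨p, hplt⟩ := Fin.ext hc
              rw [this] at hj'; omega
            refine ⟨?_, hjp⟩
            rcases Nat.lt_trichotomy (j : ℕ) (i : ℕ) with h | h | h
            · exact h
            · exfalso
              have : j = i := Fin.ext h
              rw [this] at hj'; omega
            · have := BD i j h hbig hjbig; omega
          · rintro ⟨hji, hjp⟩
            have hjl : (j : ℕ) ≠ n - 1 := by omega
            have hjbig : 2 ≤ (σ j : ℕ) := by
              rcases Nat.lt_or_ge (σ j : ℕ) 2 with h | h
              · rcases hsm j (by omega) with h' | h' <;> omega
              · exact h
            have := BD j i hji hjbig hbig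
            exact Fin.lt_def.mpr (by omega)
        have hset2 : (Finset.univ.filter fun j : Fin n => (j : ℕ) < i ∧ (j : ℕ) ≠ p)
            = (Finset.Iio i).erase ⟨p, hplt⟩ := by
          ext j
          simp only [Finset.mem_filter, Finset.mem_univ, true_and, Finset.mem_erase,
            Finset.mem_Iio, Fin.lt_def]
          constructor
          · rintro ⟨h1, h2⟩
            exact ⟨fun hc => h2 (by rw [hc]), h1⟩
          · rintro ⟨h1, h2⟩
            exact ⟨h2, fun hc => h1 (Fin.ext hc)⟩
        rw [hset, hset2] at hcard1
        rcases Nat.lt_or_ge p (i : ℕ) with hpi | hpi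
        · have hmem : (⟨p, hplt⟩ : Fin n) ∈ Finset.Iio i := by
            simp [Finset.mem_Iio, Fin.lt_def]; omega
          rw [Finset.card_erase_of_mem hmem, Fin.card_Iio] at hcard1
          unfold gVal
          split_ifs <;> omega
        · have hmem : (⟨p, hplt⟩ : Fin n) ∉ Finset.Iio i := by
            simp [Finset.mem_Iio, Fin.lt_def]; omega
          rw [Finset.erase_eq_of_notMem hmem, Fin.card_Iio] at hcard1
          unfold gVal
          split_ifs <;> omega

/-! ### The structure lemma: every avoider with maximum first is canonical -/

lemma structure_of_avoid {n : ℕ} (hn : 3 ≤ n) (σ : Fin n → Fin n)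
    (hbij : Function.Bijective σ)
    (h0 : (σ ⟨0, by omega⟩ : ℕ) = n - 1)
    (hav1 : CycAvoids σ ![1,2,3,4]) (hav2 : CycAvoids σ ![1,3,4,2]) :
    ∃ p ε, 1 ≤ p ∧ p ≤ n - 2 ∧ ∀ i : Fin n, (σ i : ℕ) = gVal n p ε i := by
  have hn0 : 0 < n := by omega
  have hn1 : n - 1 < n := by omega
  have h0' : (σ ⟨0, hn0⟩ : ℕ) = n - 1 := h0
  have hinj : ∀ x y : Fin n, (σ x : ℕ) = (σ y : ℕ) → (x : ℕ) = (y : ℕ) := by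
    intro x y h
    exact congrArg Fin.val (hbij.1 (Fin.ext h))
  obtain ⟨c0, hc0⟩ := hbij.2 ⟨0, by omega⟩
  obtain ⟨c1, hc1⟩ := hbij.2 ⟨1, by omega⟩
  have hc0v : (σ c0 : ℕ) = 0 := by rw [hc0]
  have hc1v : (σ c1 : ℕ) = 1 := by rw [hc1]
  have hzero : ∀ x : Fin n, (x : ℕ) = 0 → (σ x : ℕ) = n - 1 := by
    intro x h
    have : x = ⟨0, hn0⟩ := Fin.ext h
    rw [this]; exact h0'
  have hc0ne : (c0 : ℕ) ≠ 0 := fun h => by have := hzero c0 h; omega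
  have hc1ne : (c1 : ℕ) ≠ 0 := fun h => by have := hzero c1 h; omega
  have hc01 : (c0 : ℕ) ≠ c1 := fun h => by
    have : c0 = c1 := Fin.ext h
    rw [this] at hc0v; omega
  have hnz : ∀ x : Fin n, (x : ℕ) ≠ 0 → (σ x : ℕ) < n - 1 := by
    intro x h
    have h1 : (σ x : ℕ) < n := (σ x).isLt
    have h2 : (σ x : ℕ) ≠ n - 1 := fun hc => by
      have := hinj x ⟨0, hn0⟩ (by rw [hc, h0'])
      simp at this; omega
    omega
  -- big values decrease
  have BD : ∀ q1 q2 : Fin n, (q1 : ℕ) < q2 → 2 ≤ (σ q1 : ℕ) → 2 ≤ (σ q2 : ℕ) →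
      (σ q2 : ℕ) < σ q1 := by
    intro q1 q2 h12 hb1 hb2
    by_cases hq0 : (q1 : ℕ) = 0
    · have := hzero q1 hq0
      have := hnz q2 (by omega)
      omega
    · rcases Nat.lt_trichotomy (σ q2 : ℕ) (σ q1 : ℕ) with h | h | h
      · exact h
      · exact absurd (hinj q2 q1 h) (by omega)
      · exfalso
        have htop : (σ q2 : ℕ) < n - 1 := hnz q2 (by omega)
        have hc0q1 : (c0 : ℕ) ≠ q1 := fun hc => by
          have : c0 = q1 := Fin.ext hc
          rw [this] at hc0v; omega
        have hc0q2 : (c0 : ℕ) ≠ q2 := fun hc => by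
          have : c0 = q2 := Fin.ext hc
          rw [this] at hc0v; omega
        have hc1q1 : (c1 : ℕ) ≠ q1 := fun hc => by
          have : c1 = q1 := Fin.ext hc
          rw [this] at hc1v; omega
        have hc1q2 : (c1 : ℕ) ≠ q2 := fun hc => by
          have : c1 = q2 := Fin.ext hc
          rw [this] at hc1v; omega
        rcases Nat.lt_trichotomy (c0 : ℕ) q1 with hA | hA | hA
        · exact hav1 (occA σ hn0 q1 q2 c0 h0' h12 (by omega) (by omega) hA hb1 h htop)
        · exact hc0q1 hA
        · rcases Nat.lt_trichotomy (c0 : ℕ) q2 with hB | hB | hB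
          · exact hav2 (occB σ hn0 q1 q2 c0 h0' h12 (by omega) hA hB (by omega) hb1 h htop)
          · exact hc0q2 hB
          · rcases Nat.lt_trichotomy (c1 : ℕ) q1 with hC | hC | hC
            · exact hav1 (occA σ hn0 q1 q2 c1 h0' h12 (by omega) (by omega) hC hb1 h htop)
            · exact hc1q1 hC
            · rcases Nat.lt_trichotomy (c1 : ℕ) q2 with hD | hD | hD
              · exact hav2 (occB σ hn0 q1 q2 c1 h0' h12 (by omega) hC hD (by omega) hb1 h htop)
              · exact hc1q2 hD
              · rcases Nat.lt_trichotomy (c0 : ℕ) c1 with hE | hE | hE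
                · exact hav1 (occC σ hn0 q1 q2 c0 c1 h12 hc0v hc1v hB hE (by omega) hb1 h)
                · exact hc01 hE
                · exact hav2 (occD σ hn0 q1 q2 c1 c0 h12 hc1v hc0v hD hE (by omega) hb1 h)
  -- the last entry is small
  have hc0n := c0.isLt
  have hc1n := c1.isLt
  have lastSmall : (σ ⟨n - 1, hn1⟩ : ℕ) ≤ 1 := by
    by_contra hM
    push_neg at hM
    have hc0last : (c0 : ℕ) ≠ n - 1 := fun hc => by
      have : c0 = ⟨n - 1, hn1⟩ := Fin.ext hc
      rw [this] at hc0v; omega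
    have hc1last : (c1 : ℕ) ≠ n - 1 := fun hc => by
      have : c1 = ⟨n - 1, hn1⟩ := Fin.ext hc
      rw [this] at hc1v; omega
    have hMlt : (σ ⟨n - 1, hn1⟩ : ℕ) < n - 1 := hnz _ (by simp; omega)
    rcases Nat.lt_trichotomy (c0 : ℕ) c1 with hE | hE | hE
    · exact hav1 (occE σ hn0 hn1 c0 c1 h0' hc0v hc1v hE (by omega) (by omega) hM hMlt)
    · exact hc01 hE
    · exact hav2 (occF σ hn0 hn1 c0 c1 h0' hc0v hc1v hE (by omega) (by omega) hM hMlt)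
  -- assembly
  -- choose p and ε
  have hlast : (c0 : ℕ) = n - 1 ∨ (c1 : ℕ) = n - 1 := by
    rcases Nat.lt_trichotomy (σ (⟨n - 1, hn1⟩ : Fin n) : ℕ) 1 with h | h | h
    · left
      have := hinj c0 ⟨n - 1, hn1⟩ (by omega)
      simpa using this
    · right
      have := hinj c1 ⟨n - 1, hn1⟩ (by omega)
      simpa using this
    · omega
  rcases hlast with hl | hl
  · -- value 0 at the end: ε = false, p = c1
    have hc1nl : (c1 : ℕ) ≠ n - 1 := by omega
    refine ⟨(c1 : ℕ), false, by omega, by omega, ?_⟩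
    apply canonical_of_facts hn hn0 hn1 σ hbij h0' BD (c1 : ℕ) false (by omega) (by omega) hc1n
    · have hceq : c1 = ⟨(c1 : ℕ), hc1n⟩ := Fin.ext rfl
      rw [← hceq]; simpa using hc1v
    · have hceq : c0 = ⟨n - 1, hn1⟩ := Fin.ext hl
      rw [← hceq]; simpa using hc0v
  · -- value 1 at the end: ε = true, p = c0
    have hc0nl : (c0 : ℕ) ≠ n - 1 := by omega
    refine ⟨(c0 : ℕ), true, by omega, by omega, ?_⟩
    apply canonical_of_facts hn hn0 hn1 σ hbij h0' BD (c0 : ℕ) true (by omega) (by omega) hc0n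
    · have hceq : c0 = ⟨(c0 : ℕ), hc0n⟩ := Fin.ext rfl
      rw [← hceq]; simpa using hc0v
    · have hceq : c1 = ⟨n - 1, hn1⟩ := Fin.ext hl
      rw [← hceq]; simpa using hc1v

/-! ### Rotation lemmas -/

lemma rotSeq_rotSeq {n : ℕ} (σ : Fin n → Fin n) (r s : Fin n) :
    rotSeq (rotSeq σ r) s = rotSeq σ (s + r) := by
  funext i; simp [rotSeq, add_assoc]

lemma cycContains_rot {n k : ℕ} (σ : Fin n → Fin n) (r : Fin n) (π : Fin k → ℕ) :
    CycContains (rotSeq σ r) π ↔ CycContains σ π := by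
  haveI : NeZero n := ⟨r.pos.ne'⟩
  constructor
  · rintro ⟨s, h⟩; rw [rotSeq_rotSeq] at h; exact ⟨s + r, h⟩
  · rintro ⟨s, h⟩
    refine ⟨s - r, ?_⟩
    rwa [rotSeq_rotSeq, sub_add_cancel]

lemma cycClass_rot {n : ℕ} (σ : Fin n → Fin n) (r : Fin n) :
    CycClass (rotSeq σ r) = CycClass σ := by
  haveI : NeZero n := ⟨r.pos.ne'⟩
  ext τ
  constructor
  · rintro ⟨s, rfl⟩; exact ⟨s + r, (rotSeq_rotSeq σ r s).symm⟩
  · rintro ⟨s, rfl⟩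
    exact ⟨s - r, by rw [rotSeq_rotSeq, sub_add_cancel]⟩

/-! ### Properties of the canonical avoiders -/

lemma gVal_H1 {n p : ℕ} (hn : 3 ≤ n) (hp1 : 1 ≤ p) (hp2 : p ≤ n - 2) (ε : Bool)
    (a b : ℕ) (ha : a < n) (hb : b < n) (hab : a < b)
    (h2a : 2 ≤ gVal n p ε a) (h2b : 2 ≤ gVal n p ε b) :
    gVal n p ε b < gVal n p ε a := by
  cases ε <;> unfold gVal at h2a h2b ⊢ <;> split_ifs at h2a h2b ⊢ <;> omega

lemma gVal_H2 {n p : ℕ} (hn : 3 ≤ n) (hp1 : 1 ≤ p) (hp2 : p ≤ n - 2) (ε : Bool)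
    (a : ℕ) (ha : a < n) (hsm : gVal n p ε a ≤ 1) : a = p ∨ a = n - 1 := by
  cases ε <;> unfold gVal at hsm <;> split_ifs at hsm <;> omega

lemma gVal_inj {n p : ℕ} (hn : 3 ≤ n) (hp1 : 1 ≤ p) (hp2 : p ≤ n - 2) (ε : Bool)
    (a b : ℕ) (ha : a < n) (hb : b < n) (h : gVal n p ε a = gVal n p ε b) : a = b := by
  cases ε <;> unfold gVal at h <;> split_ifs at h <;> omega

lemma gVal_max {n p : ℕ} (hn : 3 ≤ n) (hp1 : 1 ≤ p) (hp2 : p ≤ n - 2) (ε : Bool)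
    (q : ℕ) (hq : q < n) (h : gVal n p ε q = n - 1) : q = 0 := by
  cases ε <;> unfold gVal at h <;> split_ifs at h <;> omega

lemma gfun_bij {n p : ℕ} (hn : 3 ≤ n) (hp1 : 1 ≤ p) (hp2 : p ≤ n - 2) (ε : Bool) :
    Function.Bijective (gfun n p ε) := by
  rw [Fintype.bijective_iff_injective_and_card]
  refine ⟨?_, rfl⟩
  intro a b h
  apply Fin.ext
  apply gVal_inj hn hp1 hp2 ε _ _ a.isLt b.isLt
  rw [← gfun_val hn hp1 hp2 ε a, ← gfun_val hn hp1 hp2 ε b, h]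

lemma gfun_avoids {n p : ℕ} (hn : 3 ≤ n) (hp1 : 1 ≤ p) (hp2 : p ≤ n - 2) (ε : Bool) :
    CycAvoids (gfun n p ε) ![1,2,3,4] ∧ CycAvoids (gfun n p ε) ![1,3,4,2] := by
  apply avoid_of_shape (p := p) hn (by omega)
  · intro a b hab h2a h2b
    rw [gfun_val hn hp1 hp2 ε a] at h2a
    rw [gfun_val hn hp1 hp2 ε b] at h2b
    rw [gfun_val hn hp1 hp2 ε a, gfun_val hn hp1 hp2 ε b]
    exact gVal_H1 hn hp1 hp2 ε a b a.isLt b.isLt hab h2a h2b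
  · intro a hsm
    rw [gfun_val hn hp1 hp2 ε a] at hsm
    exact gVal_H2 hn hp1 hp2 ε a a.isLt hsm

lemma rotSeq_bijective {n : ℕ} (σ : Fin n → Fin n) (hσ : Function.Bijective σ)
    (r : Fin n) : Function.Bijective (rotSeq σ r) := by
  haveI : NeZero n := ⟨r.pos.ne'⟩
  have : rotSeq σ r = σ ∘ (Equiv.addRight r) := by
    funext i; rfl
  rw [this]
  exact hσ.comp (Equiv.addRight r).bijective

/-! ### Main theorem -/

theorem card_av_1234_1342 (n : ℕ) (hn : 3 ≤ n) :
    (AvClasses n fun σ => CycAvoids σ ![1,2,3,4] ∧ CycAvoids σ ![1,3,4,2]).ncard = 2 * (n - 2) := by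
  classical
  have hn0 : 0 < n := by omega
  have hn1 : n - 1 < n := by omega
  set Tfin : Finset (ℕ × Bool) := (Finset.Icc 1 (n - 2)) ×ˢ (Finset.univ : Finset Bool)
    with hTfin
  have key : (AvClasses n fun σ => CycAvoids σ ![1,2,3,4] ∧ CycAvoids σ ![1,3,4,2])
      = (fun q : ℕ × Bool => CycClass (gfun n q.1 q.2)) '' ↑Tfin := by
    ext C
    constructor
    · rintro ⟨σp, rfl, hP1, hP2⟩
      set σ : Fin n → Fin n := ⇑σp with hσ
      set r : Fin n := σp.symm ⟨n - 1, hn1⟩ with hr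
      set τ : Fin n → Fin n := rotSeq σ r with hτ
      have hτbij : Function.Bijective τ := rotSeq_bijective σ σp.bijective r
      have hτ0 : (τ ⟨0, hn0⟩ : ℕ) = n - 1 := by
        have : ((⟨0, hn0⟩ : Fin n) + r) = r := fin_add_eq' ⟨0, hn0⟩ r r (Or.inl (by simp))
        show (σ ((⟨0, hn0⟩ : Fin n) + r) : ℕ) = n - 1
        rw [this, hr]
        simp [hσ]
      have hτ1 : CycAvoids τ ![1,2,3,4] := fun hc => hP1 ((cycContains_rot σ r _).mp hc)
      have hτ2 : CycAvoids τ ![1,3,4,2] := fun hc => hP2 ((cycContains_rot σ r _).mp hc)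
      obtain ⟨p, ε, hp1, hp2, hvals⟩ := structure_of_avoid hn τ hτbij hτ0 hτ1 hτ2
      have hτg : τ = gfun n p ε := by
        funext i
        apply Fin.ext
        rw [gfun_val hn hp1 hp2 ε]
        exact hvals i
      refine ⟨(p, ε), ?_, ?_⟩
      · simp [hTfin, Finset.mem_Icc]
        omega
      · show CycClass (gfun n p ε) = CycClass σ
        rw [← hτg, hτ]
        exact cycClass_rot σ r
    · rintro ⟨⟨p, ε⟩, hmem, rfl⟩
      simp only [hTfin, Finset.coe_product, Set.mem_prod, Finset.mem_coe,
        Finset.mem_Icc, Finset.mem_univ, and_true] at hmem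
      obtain ⟨hp1, hp2⟩ := hmem
      refine ⟨Equiv.ofBijective _ (gfun_bij hn hp1 hp2 ε), rfl, ?_⟩
      exact gfun_avoids hn hp1 hp2 ε
  rw [key]
  have hinjOn : Set.InjOn (fun q : ℕ × Bool => CycClass (gfun n q.1 q.2)) ↑Tfin := by
    rintro ⟨p1, ε1⟩ h1 ⟨p2, ε2⟩ h2 heq
    simp only [hTfin, Finset.coe_product, Set.mem_prod, Finset.mem_coe,
      Finset.mem_Icc, Finset.mem_univ, and_true] at h1 h2
    obtain ⟨hp11, hp12⟩ := h1
    obtain ⟨hp21, hp22⟩ := h2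
    simp only at heq
    -- gfun n p2 ε2 is a rotation of gfun n p1 ε1
    have hmem : gfun n p2 ε2 ∈ CycClass (gfun n p1 ε1) := by
      rw [heq]
      refine ⟨⟨0, hn0⟩, ?_⟩
      funext i
      show gfun n p2 ε2 (i + ⟨0, hn0⟩) = gfun n p2 ε2 i
      rw [fin_add_eq' i ⟨0, hn0⟩ i (Or.inl (by simp))]
    obtain ⟨r, hrot⟩ := hmem
    -- evaluate at 0
    have h00 : (gfun n p2 ε2 ⟨0, hn0⟩ : ℕ) = gVal n p1 ε1 r := by
      rw [← hrot]
      show ((gfun n p1 ε1) ((⟨0, hn0⟩ : Fin n) + r) : ℕ) = _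
      rw [fin_add_eq' ⟨0, hn0⟩ r r (Or.inl (by simp)), gfun_val hn hp11 hp12]
    rw [gfun_val hn hp21 hp22] at h00
    have hg0 : gVal n p2 ε2 0 = n - 1 := by
      unfold gVal; split_ifs <;> omega
    have hr0 : (r : ℕ) = 0 :=
      gVal_max hn hp11 hp12 ε1 r r.isLt (by rw [← h00, hg0])
    have hfeq : gfun n p1 ε1 = gfun n p2 ε2 := by
      rw [← hrot]
      funext i
      show (gfun n p1 ε1) i = (gfun n p1 ε1) (i + r)
      rw [fin_add_eq' i r i (Or.inl (by omega))]
    have hveq : ∀ q : ℕ, q < n → gVal n p1 ε1 q = gVal n p2 ε2 q := by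
      intro q hq
      have := congrFun hfeq ⟨q, hq⟩
      have h' := congrArg Fin.val this
      rwa [gfun_val hn hp11 hp12, gfun_val hn hp21 hp22] at h'
    have hee : ε1 = ε2 := by
      have e3 := hveq (n - 1) (by omega)
      have hne1 : n - 1 ≠ p1 := by omega
      have hne2 : n - 1 ≠ p2 := by omega
      unfold gVal at e3
      rw [if_neg hne1, if_pos rfl, if_neg hne2, if_pos rfl] at e3
      cases ε1 <;> cases ε2 <;> first | rfl | (exfalso; revert e3; decide)
    subst hee
    have hnn : p1 = p2 := by
      by_contra hne
      have e1 := hveq p1 (by omega)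
      have h2 : p1 ≠ n - 1 := by omega
      unfold gVal at e1
      rw [if_pos rfl, if_neg hne, if_neg h2] at e1
      cases ε1 <;> simp at e1 <;> split_ifs at e1 <;> omega
    rw [hnn]
  rw [Set.ncard_image_of_injOn hinjOn, Set.ncard_coe_finset, hTfin,
    Finset.card_product, Nat.card_Icc]
  simp
  omega
end

section
/- For every integer n ≥ 6, there are no cyclic permutations of length n avoiding both cyclic patterns [1234] and [1432]; that is, #Av_n([1234],[1432]) = 0. -/
open Function Finset in
private theorem my_erdos_szekeres {α : Type*} [LinearOrder α] {r s n : ℕ} {f : Fin n → α} (hn : r * s < n) (hf : Injective f) :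
    (∃ t : Finset (Fin n), r < #t ∧ StrictMonoOn f ↑t) ∨
      ∃ t : Finset (Fin n), s < #t ∧ StrictAntiOn f ↑t := by
  -- Given an index `i`, produce the set of increasing (resp., decreasing) subsequences which ends
  -- at `i`.
  let inc_sequences_ending_in : Fin n → Finset (Finset (Fin n)) := fun i =>
    univ.powerset.filter fun t => Finset.max t = i ∧ StrictMonoOn f ↑t
  let dec_sequences_ending_in : Fin n → Finset (Finset (Fin n)) := fun i =>
    univ.powerset.filter fun t => Finset.max t = i ∧ StrictAntiOn f ↑t
  -- The singleton sequence is in both of the above collections.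
  -- (This is useful to show that the maximum length subsequence is at least 1, and that the set
  -- of subsequences is nonempty.)
  have inc_i : ∀ i, {i} ∈ inc_sequences_ending_in i := fun i => by
    simp [inc_sequences_ending_in, StrictMonoOn]
  have dec_i : ∀ i, {i} ∈ dec_sequences_ending_in i := fun i => by
    simp [dec_sequences_ending_in, StrictAntiOn]
  -- Define the pair of labels: at index `i`, the pair is the maximum length of an increasing
  -- subsequence ending at `i`, paired with the maximum length of a decreasing subsequence ending
  -- at `i`.
  -- We call these labels `(a_i, b_i)`.
  let ab' : Fin n → ℕ × ℕ := by
    intro i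
    apply
      (max' ((inc_sequences_ending_in i).image card) (Nonempty.image ⟨{i}, inc_i i⟩ _),
        max' ((dec_sequences_ending_in i).image card) (Nonempty.image ⟨{i}, dec_i i⟩ _))
  -- Porting note: it costs many resources to unfold `ab'` so we obscure the definition:
  generalize hab : ab' = ab
  -- It now suffices to show that one of the labels is 'big' somewhere. In particular, if the
  -- first in the pair is more than `r` somewhere, then we have an increasing subsequence in our
  -- set, and if the second is more than `s` somewhere, then we have a decreasing subsequence.
  rsuffices ⟨i, hi⟩ : ∃ i, r < (ab i).1 ∨ s < (ab i).2
  · refine Or.imp ?_ ?_ hi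
    on_goal 1 =>
      have : (ab i).1 ∈ image card (inc_sequences_ending_in i) := by
        simp only [← hab]; exact max'_mem _ (Nonempty.image ⟨{i}, inc_i i⟩ _)
    on_goal 2 =>
      have : (ab i).2 ∈ image card (dec_sequences_ending_in i) := by
        simp only [← hab]; exact max'_mem _ (Nonempty.image ⟨{i}, dec_i i⟩ _)
    all_goals
      intro hi
      rw [mem_image] at this
      obtain ⟨t, ht₁, ht₂⟩ := this
      refine ⟨t, by rwa [ht₂], ?_⟩
      rw [mem_filter] at ht₁
      apply ht₁.2.2
  -- Show first that the pair of labels is unique.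
  have : Injective ab := by
    simp only [← hab]
    apply Function.Injective.of_lt_imp_ne
    intro i j k q
    injection q with q₁ q₂
    -- We have two cases: `f i < f j` or `f j < f i`.
    -- In the former we'll show `a_i < a_j`, and in the latter we'll show `b_i < b_j`.
    cases lt_or_gt_of_ne fun _ => ne_of_lt ‹i < j› (hf ‹f i = f j›)
    on_goal 1 =>
      apply ne_of_lt _ q₁
      have : (ab' i).1 ∈ image card (inc_sequences_ending_in i) := by exact max'_mem _ (Nonempty.image ⟨{i}, inc_i i⟩ _)
    on_goal 2 =>
      apply ne_of_lt _ q₂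
      have : (ab' i).2 ∈ image card (dec_sequences_ending_in i) := by exact max'_mem _ (Nonempty.image ⟨{i}, dec_i i⟩ _)
    all_goals
      -- Reduce to showing there is a subsequence of length `a_i + 1` which ends at `j`.
      rw [Nat.lt_iff_add_one_le]
      apply le_max'
      rw [mem_image] at this ⊢
      -- In particular we take the subsequence `t` of length `a_i` which ends at `i`, by definition
      -- of `a_i`
      rcases this with ⟨t, ht₁, ht₂⟩
      rw [mem_filter] at ht₁
      -- Ensure `t` ends at `i`.
      have : t.max = i := by simp only [ht₁.2.1]
      -- Now our new subsequence is given by adding `j` at the end of `t`.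
      refine ⟨insert j t, ?_, ?_⟩
      -- First make sure it's valid, i.e., that this subsequence ends at `j` and is increasing
      · rw [mem_filter]
        refine ⟨?_, ?_, ?_⟩
        · rw [mem_powerset]; apply subset_univ
        -- It ends at `j` since `i < j`.
        · convert max_insert (a := j) (s := t)
          rw [ht₁.2.1, max_eq_left]
          apply WithBot.coe_le_coe.mpr (le_of_lt ‹i < j›)
        -- To show it's increasing (i.e., `f` is monotone increasing on `t.insert j`), we do cases
        -- on what the possibilities could be - either in `t` or equals `j`.
        simp only [StrictMonoOn, StrictAntiOn, coe_insert, Set.mem_insert_iff, mem_coe]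
        -- Most of the cases are just bashes.
        rintro x ⟨rfl | _⟩ y ⟨rfl | _⟩ _
        · apply (irrefl _ ‹j < j›).elim
        · exfalso
          apply not_le_of_gt (_root_.trans ‹i < j› ‹j < y›) (le_max_of_eq ‹y ∈ t› ‹t.max = i›)
        · first
          | apply lt_of_le_of_lt _ ‹f i < f j›
          | apply lt_of_lt_of_le ‹f j < f i› _
          rcases lt_or_eq_of_le (le_max_of_eq ‹x ∈ t› ‹t.max = i›) with (_ | rfl)
          · apply le_of_lt (ht₁.2.2 ‹x ∈ t› (mem_of_max ‹t.max = i›) ‹x < i›)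
          · rfl
        · apply ht₁.2.2 ‹x ∈ t› ‹y ∈ t› ‹x < y›
      -- Finally show that this new subsequence is one longer than the old one.
      · rw [card_insert_of_notMem, ht₂]
        intro
        apply not_le_of_gt ‹i < j› (le_max_of_eq ‹j ∈ t› ‹t.max = i›)
  -- Finished both goals!
  -- Now that we have uniqueness of each label, it remains to do some counting to finish off.
  -- Suppose all the labels are small.
  by_contra! q
  -- Then the labels `(a_i, b_i)` all fit in the following set: `{ (x,y) | 1 ≤ x ≤ r, 1 ≤ y ≤ s }`
  let ran : Finset (ℕ × ℕ) := (range r).image Nat.succ ×ˢ (range s).image Nat.succ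
  -- which we prove here.
  have : image ab univ ⊆ ran := by
    -- First some logical shuffling
    rintro ⟨x₁, x₂⟩
    simp only [ran, mem_image, exists_prop, mem_range, mem_univ, mem_product, true_and,
      Prod.ext_iff]
    rintro ⟨i, rfl, rfl⟩
    specialize q i
    -- Show `1 ≤ a_i` and `1 ≤ b_i`, which is easy from the fact that `{i}` is an increasing and
    -- decreasing subsequence which we did right near the top.
    have z : 1 ≤ (ab i).1 ∧ 1 ≤ (ab i).2 := by
      simp only [← hab]
      constructor <;>
        · apply le_max'
          rw [mem_image]
          exact ⟨{i}, by solve_by_elim, card_singleton i⟩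
    -- Need to get `a_i ≤ r`, here phrased as: there is some `a < r` with `a+1 = a_i`.
    exact ⟨⟨(ab i).1 - 1, by omega⟩, (ab i).2 - 1, by omega⟩
  -- To get our contradiction, it suffices to prove `n ≤ r * s`
  apply not_le_of_gt hn
  -- Which follows from considering the cardinalities of the subset above, since `ab` is injective.
  simpa [ran, Nat.succ_injective, card_image_of_injective, ‹Injective ab›] using card_le_card this

lemma sort3 {α : Type*} [LinearOrder α] {t : Finset α} (h : 2 < t.card) :
    ∃ a b c : α, a ∈ t ∧ b ∈ t ∧ c ∈ t ∧ a < b ∧ b < c := by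
  rw [Finset.two_lt_card_iff] at h
  obtain ⟨a, b, c, ha, hb, hc, hab, hac, hbc⟩ := h
  rcases hab.lt_or_gt with h1 | h1 <;> rcases hac.lt_or_gt with h2 | h2 <;>
      rcases hbc.lt_or_gt with h3 | h3 <;>
    first
      | exact ⟨a, b, c, ha, hb, hc, h1, h3⟩
      | exact ⟨a, c, b, ha, hc, hb, h2, h3⟩
      | exact ⟨c, a, b, hc, ha, hb, h2, h1⟩
      | exact ⟨b, a, c, hb, ha, hc, h1, h2⟩
      | exact ⟨b, c, a, hb, hc, ha, h3, h2⟩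
      | exact ⟨c, b, a, hc, hb, ha, h3, h1⟩
      | exact absurd ((h2.trans h1).trans h3) (lt_irrefl c)
      | exact absurd ((h1.trans h2).trans h3) (lt_irrefl b)

lemma mono4 {n : ℕ} (x y z w : Fin n) (hxy : x < y) (hyz : y < z) (hzw : z < w) :
    StrictMono ![x,y,z,w] := by
  intro i j hij
  fin_cases i <;> fin_cases j <;> simp_all <;>
    first
      | exact hxy
      | exact hyz
      | exact hzw
      | exact hxy.trans hyz
      | exact hyz.trans hzw
      | exact hxy.trans (hyz.trans hzw)

lemma contains_1234 {n : ℕ} (τ : Fin n → Fin n) (x y z w : Fin n)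
    (hxy : x < y) (hyz : y < z) (hzw : z < w)
    (h1 : τ x < τ y) (h2 : τ y < τ z) (h3 : τ z < τ w) : ContainsPat τ ![1,2,3,4] := by
  refine ⟨![x,y,z,w], mono4 x y z w hxy hyz hzw, ?_⟩
  intro i j
  fin_cases i <;> fin_cases j <;> simp <;>
    first
      | exact h1
      | exact h2
      | exact h3
      | exact h1.trans h2
      | exact h2.trans h3
      | exact h1.trans (h2.trans h3)
      | exact h1.le
      | exact h2.le
      | exact h3.le
      | exact (h1.trans h2).le
      | exact (h2.trans h3).le
      | exact (h1.trans (h2.trans h3)).le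

lemma contains_1432 {n : ℕ} (τ : Fin n → Fin n) (x y z w : Fin n)
    (hxy : x < y) (hyz : y < z) (hzw : z < w)
    (h1 : τ x < τ w) (h2 : τ w < τ z) (h3 : τ z < τ y) : ContainsPat τ ![1,4,3,2] := by
  refine ⟨![x,y,z,w], mono4 x y z w hxy hyz hzw, ?_⟩
  intro i j
  fin_cases i <;> fin_cases j <;> simp <;>
    first
      | exact h1
      | exact h2
      | exact h3
      | exact h1.trans h2
      | exact h2.trans h3
      | exact h1.trans (h2.trans h3)
      | exact h1.le
      | exact h2.le
      | exact h3.le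
      | exact (h1.trans h2).le
      | exact (h2.trans h3).le
      | exact (h1.trans (h2.trans h3)).le

lemma main_contains {n : ℕ} (hn : 6 ≤ n) (σ : Equiv.Perm (Fin n)) :
    CycContains ⇑σ ![1,2,3,4] ∨ CycContains ⇑σ ![1,4,3,2] := by
  have hn0 : 0 < n := by omega
  set z0 : Fin n := ⟨0, hn0⟩ with hz0
  set r : Fin n := σ.symm z0 with hr
  set τ : Fin n → Fin n := rotSeq (⇑σ) r with hτ
  have hinj : Function.Injective τ := by
    intro a b h
    have := σ.injective h
    exact add_right_cancel this
  have hτ0 : τ z0 = z0 := by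
    have hzr : z0 + r = r := by
      apply Fin.ext
      simp [Fin.add_def, hz0, Nat.mod_eq_of_lt r.isLt]
    show σ (z0 + r) = z0
    rw [hzr, hr, Equiv.apply_symm_apply]
  -- positions 1..5
  have hlt : ∀ m : Fin 5, (m : ℕ) + 1 < n := fun m => by omega
  set g : Fin 5 → Fin n := fun m => τ ⟨(m : ℕ) + 1, hlt m⟩ with hg
  have hginj : Function.Injective g := by
    intro a b h
    have := hinj h
    have : (a : ℕ) + 1 = (b : ℕ) + 1 := congrArg Fin.val this
    exact Fin.ext (by omega)
  have h45 : 2 * 2 < 5 := by norm_num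
  have hpos : ∀ m : Fin 5, z0 < g m := by
    intro m
    have hne : g m ≠ z0 := by
      intro h
      rw [← hτ0] at h
      have := hinj h
      have := congrArg Fin.val this
      simp [hz0] at this
    rw [Fin.lt_def]
    simp only [hz0]
    exact Nat.pos_of_ne_zero (fun h => hne (Fin.ext (by simp [hz0, h])))
  rcases my_erdos_szekeres h45 hginj with ⟨t, htc, htm⟩ | ⟨t, htc, htm⟩
  · -- increasing: pattern 1234
    obtain ⟨a, b, c, ha, hb, hc, hab, hbc⟩ := sort3 htc
    left
    refine ⟨r, ?_⟩
    refine contains_1234 τ z0 ⟨(a : ℕ) + 1, hlt a⟩ ⟨(b : ℕ) + 1, hlt b⟩ ⟨(c : ℕ) + 1, hlt c⟩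
      ?_ ?_ ?_ ?_ ?_ ?_
    · simp only [hz0]; exact Fin.mk_lt_mk.mpr (by omega)
    · exact Fin.mk_lt_mk.mpr (by have := Fin.lt_def.mp hab; omega)
    · exact Fin.mk_lt_mk.mpr (by have := Fin.lt_def.mp hbc; omega)
    · rw [show τ z0 = z0 from hτ0]; exact hpos a
    · exact htm ha hb hab
    · exact htm hb hc hbc
  · -- decreasing: pattern 1432
    obtain ⟨a, b, c, ha, hb, hc, hab, hbc⟩ := sort3 htc
    right
    refine ⟨r, ?_⟩
    refine contains_1432 τ z0 ⟨(a : ℕ) + 1, hlt a⟩ ⟨(b : ℕ) + 1, hlt b⟩ ⟨(c : ℕ) + 1, hlt c⟩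
      ?_ ?_ ?_ ?_ ?_ ?_
    · simp only [hz0]; exact Fin.mk_lt_mk.mpr (by omega)
    · exact Fin.mk_lt_mk.mpr (by have := Fin.lt_def.mp hab; omega)
    · exact Fin.mk_lt_mk.mpr (by have := Fin.lt_def.mp hbc; omega)
    · rw [show τ z0 = z0 from hτ0]; exact hpos c
    · exact htm hb hc hbc
    · exact htm ha hb hab


theorem card_av_1234_1432 (n : ℕ) (hn : 6 ≤ n) :
    (AvClasses n fun σ => CycAvoids σ ![1,2,3,4] ∧ CycAvoids σ ![1,4,3,2]).ncard = 0 := by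
  have hempty : (AvClasses n fun σ => CycAvoids σ ![1,2,3,4] ∧ CycAvoids σ ![1,4,3,2]) = ∅ := by
    rw [Set.eq_empty_iff_forall_notMem]
    rintro C ⟨σ, -, h1, h2⟩
    rcases main_contains hn σ with h | h
    · exact h1 h
    · exact h2 h
  rw [hempty, Set.ncard_empty]
end
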